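/- Let s₁, s₂, s₃ ∈ S with s₁ ≠ s₂. Set α₁ = |s₂−s₃|²/|s₁−s₂|², α₂ = |s₁−s₃|²/|s₁−s₂|², and σ₃ = s̃₃ − α₁ s̃₁ − α₂ s̃₂ ∈ ℝ^{n+1}. Then [σ₃, s̃₁] = 0 and [σ₃, s̃₂] = 0 (so σ₃ is the component of s̃₃ orthogonal, with respect to [·,·], to span{s̃₁, s̃₂}), and −q(σ₃) = (|s₁−s₃| · |s₂−s₃| / |s₁−s₂|)². -/

import Mathlib

open MeasureTheory Matrix

noncomputable section

/-- The Lorentzian bilinear form `[x,y] = x₀y₀ − Σ_{i=1}^n x_i y_i` on `ℝ^{n+1}`. -/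
def lform (n : ℕ) (x y : Fin (n+1) → ℝ) : ℝ :=
  x 0 * y 0 - ∑ i : Fin n, x i.succ * y i.succ

/-- For `x ∈ S ⊂ ℝⁿ`, `x̃ = (1, x₁, …, x_n) ∈ ℝ^{n+1}`. -/
def tilde (n : ℕ) (x : EuclideanSpace ℝ (Fin n)) : Fin (n+1) → ℝ :=
  Fin.cons 1 (fun i => x i)

/-- Membership in `G = SO₀(1,n)`. -/
def IsLorentz (n : ℕ) (g : Matrix (Fin (n+1)) (Fin (n+1)) ℝ) : Prop :=
  (∀ x y : Fin (n+1) → ℝ, lform n (g.mulVec x) (g.mulVec y) = lform n x y)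
    ∧ g.det = 1 ∧ 0 < g 0 0

/-- The conformal action of `G` on the sphere: `g(x)ᵢ = (g x̃)ᵢ / (g x̃)₀`. -/
def sphAct (n : ℕ) (g : Matrix (Fin (n+1)) (Fin (n+1)) ℝ)
    (x : EuclideanSpace ℝ (Fin n)) : EuclideanSpace ℝ (Fin n) :=
  WithLp.toLp 2 (fun i : Fin n => g.mulVec (tilde n x) i.succ / g.mulVec (tilde n x) 0)

/-- The conformal factor `κ(g,x) = (g x̃)₀⁻¹`. -/
def kappa (n : ℕ) (g : Matrix (Fin (n+1)) (Fin (n+1)) ℝ)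
    (x : EuclideanSpace ℝ (Fin n)) : ℝ :=
  (g.mulVec (tilde n x) 0)⁻¹

lemma lform_sub (n : ℕ) (x y z : Fin (n+1) → ℝ) :
    lform n (x - y) z = lform n x z - lform n y z := by
  simp [lform, Pi.sub_apply, sub_mul, Finset.sum_sub_distrib]; ring

lemma lform_smul (n : ℕ) (a : ℝ) (x y : Fin (n+1) → ℝ) :
    lform n (a • x) y = a * lform n x y := by
  simp [lform, Pi.smul_apply, smul_eq_mul, mul_sub, Finset.mul_sum, mul_assoc]

lemma lform_comm (n : ℕ) (x y : Fin (n+1) → ℝ) :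
    lform n x y = lform n y x := by
  unfold lform
  rw [mul_comm]
  congr 1
  exact Finset.sum_congr rfl (fun i _ => mul_comm _ _)

lemma lform_sub_right (n : ℕ) (x y z : Fin (n+1) → ℝ) :
    lform n z (x - y) = lform n z x - lform n z y := by
  rw [lform_comm, lform_sub, lform_comm n x z, lform_comm n y z]

lemma lform_smul_right (n : ℕ) (a : ℝ) (x y : Fin (n+1) → ℝ) :
    lform n y (a • x) = a * lform n y x := by
  rw [lform_comm, lform_smul, lform_comm]

lemma lform_tilde (n : ℕ) (x y : EuclideanSpace ℝ (Fin n))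
    (hx : ‖x‖ = 1) (hy : ‖y‖ = 1) :
    lform n (tilde n x) (tilde n y) = ‖x - y‖ ^ 2 / 2 := by
  have hinner : (inner ℝ x y : ℝ) = ∑ i : Fin n, x i * y i := by
    rw [PiLp.inner_apply]; simp [RCLike.inner_apply, conj_trivial, mul_comm]
  have hns : ‖x - y‖ ^ 2 = 2 - 2 * (inner ℝ x y : ℝ) := by
    rw [norm_sub_sq_real, hx, hy]; ring
  simp only [lform, tilde, Fin.cons_zero, Fin.cons_succ]
  rw [← hinner, hns]; ring

/-- with α₁ = |s₂−s₃|²/|s₁−s₂|², α₂ = |s₁−s₃|²/|s₁−s₂|² and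
σ₃ = s̃₃ − α₁ s̃₁ − α₂ s̃₂, one has [σ₃, s̃₁] = [σ₃, s̃₂] = 0 and
−q(σ₃) = (|s₁−s₃||s₂−s₃|/|s₁−s₂|)². -/
theorem statement15 (n : ℕ) (hn : 2 ≤ n)
    (s₁ s₂ s₃ : EuclideanSpace ℝ (Fin n))
    (h₁ : ‖s₁‖ = 1) (h₂ : ‖s₂‖ = 1) (h₃ : ‖s₃‖ = 1) (h12 : s₁ ≠ s₂) :
    ∀ σ₃ : Fin (n+1) → ℝ,
      σ₃ = tilde n s₃ - (‖s₂ - s₃‖ ^ 2 / ‖s₁ - s₂‖ ^ 2) • tilde n s₁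
            - (‖s₁ - s₃‖ ^ 2 / ‖s₁ - s₂‖ ^ 2) • tilde n s₂ →
      lform n σ₃ (tilde n s₁) = 0 ∧ lform n σ₃ (tilde n s₂) = 0 ∧
      -lform n σ₃ σ₃ = (‖s₁ - s₃‖ * ‖s₂ - s₃‖ / ‖s₁ - s₂‖) ^ 2 := by
  intro σ₃ hσ
  have ha : ‖s₁ - s₂‖ ≠ 0 := by
    simpa [sub_eq_zero] using h12
  set a := ‖s₁ - s₂‖ ^ 2 with haa
  set b := ‖s₁ - s₃‖ ^ 2 with hbb
  set c := ‖s₂ - s₃‖ ^ 2 with hcc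
  have ha2 : a ≠ 0 := pow_ne_zero _ ha
  have e11 : lform n (tilde n s₁) (tilde n s₁) = 0 := by
    rw [lform_tilde n _ _ h₁ h₁]; simp
  have e22 : lform n (tilde n s₂) (tilde n s₂) = 0 := by
    rw [lform_tilde n _ _ h₂ h₂]; simp
  have e33 : lform n (tilde n s₃) (tilde n s₃) = 0 := by
    rw [lform_tilde n _ _ h₃ h₃]; simp
  have e12 : lform n (tilde n s₁) (tilde n s₂) = a / 2 := lform_tilde n _ _ h₁ h₂
  have e13 : lform n (tilde n s₁) (tilde n s₃) = b / 2 := lform_tilde n _ _ h₁ h₃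
  have e23 : lform n (tilde n s₂) (tilde n s₃) = c / 2 := lform_tilde n _ _ h₂ h₃
  have e21 : lform n (tilde n s₂) (tilde n s₁) = a / 2 := by rw [lform_comm]; exact e12
  have e31 : lform n (tilde n s₃) (tilde n s₁) = b / 2 := by rw [lform_comm]; exact e13
  have e32 : lform n (tilde n s₃) (tilde n s₂) = c / 2 := by rw [lform_comm]; exact e23
  subst hσ
  simp only [lform_sub, lform_smul, lform_sub_right, lform_smul_right,
    e11, e22, e33, e12, e13, e23, e21, e31, e32]
  refine ⟨by field_simp; ring, by field_simp; ring, ?_⟩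
  rw [div_pow, mul_pow, ← haa, ← hbb, ← hcc]
  field_simp
  ring
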